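/- Let α ∈ ℝ, let n ≥ 1 be an integer, let N ≥ 1, let β_1, …, β_N ∈ ℝ, and for each j let P_j, Q_j be ℝ^{d×d}-valued polynomials of degree n with P_j(t) = t^n P_j^* + O(t^{n−1}) and Q_j(t) = t^n Q_j^* + O(t^{n−1}). Suppose r : [0,∞) → ℝ^{d×d} satisfies r(t) = Σ_{j=1}^N e^{α t} { P_j(t) cos(β_j t) + Q_j(t) sin(β_j t) } + R(t) for t ≥ 0, where ‖R(t)‖ ≤ M (1+t)^{n−1} e^{α t} for all t ≥ 0 and some M > 0. Let f : [0,∞) → ℝ^d be continuous with ∫₀^∞ e^{−α t} |f(t)| dt < ∞. Then lim_{t→∞} ( (1 / (t^n e^{α t})) ∫₀^t r(t−s) f(s) ds − Σ_{j=1}^N { D_{1,j} sin(β_j t) + D_{2,j} cos(β_j t) } ) = 0, where D_{1,j} = ∫₀^∞ e^{−α s} { P_j^* sin(β_j s) + Q_j^* cos(β_j s) } f(s) ds and D_{2,j} = ∫₀^∞ e^{−α s} { P_j^* cos(β_j s) − Q_j^* sin(β_j s) } f(s) ds. -/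

import Mathlib

open MeasureTheory Set Filter Matrix

noncomputable def frob {d e : ℕ} (A : Matrix (Fin d) (Fin e) ℝ) : ℝ :=
  Real.sqrt (∑ i, ∑ j, (A i j) ^ 2)

noncomputable def eNorm {d : ℕ} (v : Fin d → ℝ) : ℝ :=
  Real.sqrt (∑ i, (v i) ^ 2)

section aux
variable {d : ℕ}

lemma eNorm_nonneg (v : Fin d → ℝ) : 0 ≤ eNorm v := Real.sqrt_nonneg _

lemma frob_nonneg (A : Matrix (Fin d) (Fin d) ℝ) : 0 ≤ frob A := Real.sqrt_nonneg _

lemma frob_eq_norm (A : Matrix (Fin d) (Fin d) ℝ) :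
    frob A = ‖(WithLp.equiv 2 (Fin d × Fin d → ℝ)).symm (fun p => A p.1 p.2)‖ := by
  rw [EuclideanSpace.norm_eq, frob]
  congr 1
  rw [show (∑ i : Fin d × Fin d, ‖(WithLp.equiv 2 (Fin d × Fin d → ℝ)).symm (fun p => A p.1 p.2) i‖ ^ 2)
      = ∑ i : Fin d × Fin d, A i.1 i.2 ^ 2 from
    Finset.sum_congr rfl fun p _ => by simp only [Real.norm_eq_abs, sq_abs]; rfl]
  rw [Fintype.sum_prod_type]
lemma frob_smul (c : ℝ) (A : Matrix (Fin d) (Fin d) ℝ) : frob (c • A) = |c| * frob A := by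
  rw [frob_eq_norm, frob_eq_norm]
  have : (WithLp.equiv 2 (Fin d × Fin d → ℝ)).symm (fun p => (c • A) p.1 p.2)
      = c • (WithLp.equiv 2 (Fin d × Fin d → ℝ)).symm (fun p => A p.1 p.2) := rfl
  rw [this, norm_smul, Real.norm_eq_abs]

lemma frob_add_le (A B : Matrix (Fin d) (Fin d) ℝ) : frob (A + B) ≤ frob A + frob B := by
  rw [frob_eq_norm, frob_eq_norm, frob_eq_norm]
  exact norm_add_le ((WithLp.equiv 2 (Fin d × Fin d → ℝ)).symm (fun p => A p.1 p.2)) ((WithLp.equiv 2 (Fin d × Fin d → ℝ)).symm (fun p => B p.1 p.2))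

lemma frob_sub_le (A B : Matrix (Fin d) (Fin d) ℝ) : frob (A - B) ≤ frob A + frob B := by
  rw [frob_eq_norm, frob_eq_norm, frob_eq_norm]
  exact (norm_sub_le ((WithLp.equiv 2 (Fin d × Fin d → ℝ)).symm (fun p => A p.1 p.2)) ((WithLp.equiv 2 (Fin d × Fin d → ℝ)).symm (fun p => B p.1 p.2)))

lemma frob_sum_le {ι : Type*} (s : Finset ι) (A : ι → Matrix (Fin d) (Fin d) ℝ) :
    frob (∑ i ∈ s, A i) ≤ ∑ i ∈ s, frob (A i) := by
  classical
  induction s using Finset.induction with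
  | empty => simp [frob]
  | insert _ _ h ih =>
      rw [Finset.sum_insert h, Finset.sum_insert h]
      exact (frob_add_le _ _).trans (by linarith)

lemma norm_le_eNorm (v : Fin d → ℝ) : ‖v‖ ≤ eNorm v := by
  rw [pi_norm_le_iff_of_nonneg (eNorm_nonneg v)]
  intro i
  rw [Real.norm_eq_abs, ← Real.sqrt_sq_eq_abs]
  exact Real.sqrt_le_sqrt (Finset.single_le_sum (fun k _ => sq_nonneg (v k)) (Finset.mem_univ i))

lemma norm_mulVec_le (A : Matrix (Fin d) (Fin d) ℝ) (v : Fin d → ℝ) :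
    ‖A.mulVec v‖ ≤ frob A * eNorm v := by
  rw [pi_norm_le_iff_of_nonneg (mul_nonneg (frob_nonneg A) (eNorm_nonneg v))]
  intro i
  have h1 : ∀ (w : Fin d → ℝ), ∑ k, w k * v k ≤ frob A * eNorm v →
      (∀ k, w k ^ 2 = A i k ^ 2) → True := fun _ _ _ => trivial
  have key : ∀ w : Fin d → ℝ, (∀ k, w k ^ 2 = A i k ^ 2) →
      ∑ k, w k * v k ≤ frob A * eNorm v := by
    intro w hw
    refine (Real.sum_mul_le_sqrt_mul_sqrt Finset.univ w v).trans ?_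
    refine mul_le_mul_of_nonneg_right ?_ (eNorm_nonneg v)
    rw [frob]
    refine Real.sqrt_le_sqrt ?_
    rw [Finset.sum_congr rfl fun k _ => hw k]
    exact Finset.single_le_sum (f := fun i => ∑ k, A i k ^ 2)
      (fun k _ => Finset.sum_nonneg fun _ _ => sq_nonneg _) (Finset.mem_univ i)
  rw [Real.norm_eq_abs, abs_le]
  constructor
  · have := key (fun k => -A i k) (fun k => by ring)
    simp only [neg_mul, Finset.sum_neg_distrib] at this
    simpa [Matrix.mulVec, dotProduct] using by linarith [this]
  · simpa [Matrix.mulVec, dotProduct] using key (fun k => A i k) (fun k => rfl)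

lemma sum_mulVec {ι : Type*} (s : Finset ι) (A : ι → Matrix (Fin d) (Fin d) ℝ)
    (v : Fin d → ℝ) : (∑ i ∈ s, A i).mulVec v = ∑ i ∈ s, (A i).mulVec v := by
  ext k
  simp only [Matrix.mulVec, dotProduct, Finset.sum_apply]
  calc ∑ x, (∑ i ∈ s, A i) k x * v x
      = ∑ x, ∑ i ∈ s, A i k x * v x := by
        refine Finset.sum_congr rfl fun x _ => ?_
        rw [Matrix.sum_apply, Finset.sum_mul]
    _ = ∑ i ∈ s, ∑ x, A i k x * v x := Finset.sum_comm

lemma cont_mulVec {d : ℕ} {A : ℝ → Matrix (Fin d) (Fin d) ℝ} {f : ℝ → Fin d → ℝ}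
    (hA : ∀ i k, Continuous fun s => A s i k) (hf : Continuous f) :
    Continuous fun s => (A s).mulVec (f s) :=
  (continuous_pi fun i => continuous_pi fun k => hA i k).matrix_mulVec hf

lemma continuous_eNorm_comp {d : ℕ} {f : ℝ → Fin d → ℝ} (hf : Continuous f) :
    Continuous fun s => eNorm (f s) :=
  Real.continuous_sqrt.comp (continuous_finset_sum _ fun i _ =>
    ((continuous_apply i).comp hf).pow 2)


lemma frob_comb_le {d : ℕ} (a b : ℝ) (P Q : Matrix (Fin d) (Fin d) ℝ)
    (ha : |a| ≤ 1) (hb : |b| ≤ 1) : frob (a • P + b • Q) ≤ frob P + frob Q := by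
  refine (frob_add_le _ _).trans ?_
  rw [frob_smul, frob_smul]
  nlinarith [frob_nonneg P, frob_nonneg Q, abs_nonneg a, abs_nonneg b]

lemma frob_comb_sub_le {d : ℕ} (a b : ℝ) (P Q : Matrix (Fin d) (Fin d) ℝ)
    (ha : |a| ≤ 1) (hb : |b| ≤ 1) : frob (a • P - b • Q) ≤ frob P + frob Q := by
  rw [sub_eq_add_neg, ← neg_smul]
  exact frob_comb_le a (-b) P Q ha (by rwa [abs_neg])

lemma norm_smul_mulVec_le {d : ℕ} {c K : ℝ} (hc : 0 ≤ c) {A : Matrix (Fin d) (Fin d) ℝ}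
    (hA : frob A ≤ K) (v : Fin d → ℝ) : ‖c • A.mulVec v‖ ≤ K * (c * eNorm v) := by
  rw [norm_smul, Real.norm_eq_abs, abs_of_nonneg hc]
  have h1 := (norm_mulVec_le A v).trans (mul_le_mul_of_nonneg_right hA (eNorm_nonneg v))
  nlinarith [eNorm_nonneg v, norm_nonneg (A.mulVec v)]


end aux

set_option maxHeartbeats 2000000 in
/-- deterministic convolution asymptotics, case `n ≥ 1`.
If `r(t) = Σ_j e^{αt}{P_j(t)cos(β_j t) + Q_j(t)sin(β_j t)} + R(t)`, where `P_j, Q_j` are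
matrix polynomials of degree `n` with leading coefficients `P_j^*, Q_j^*`
(encoded via their coefficient matrices `Pc j m`, `Qc j m`, `0 ≤ m ≤ n`) and
`‖R(t)‖ ≤ M(1+t)^{n−1}e^{αt}`, and if `f` is continuous with `∫₀^∞ e^{−αt}|f(t)|dt < ∞`,
then `(1/(t^n e^{αt})) ∫₀^t r(t−s)f(s)ds − Σ_j {D_{1,j} sin(β_j t) + D_{2,j} cos(β_j t)} → 0`. -/
theorem stmt9 (d : ℕ) (α : ℝ) (n : ℕ) (hn : 1 ≤ n) (N : ℕ) (hN : 1 ≤ N)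
    (β : Fin N → ℝ)
    (Pc Qc : Fin N → ℕ → Matrix (Fin d) (Fin d) ℝ)
    (Pstar Qstar : Fin N → Matrix (Fin d) (Fin d) ℝ)
    (hPlead : ∀ j, Pc j n = Pstar j) (hQlead : ∀ j, Qc j n = Qstar j)
    (r Rr : ℝ → Matrix (Fin d) (Fin d) ℝ)
    (hRmeas : ∀ i k, Measurable fun t => Rr t i k)
    (M : ℝ) (hM : 0 < M)
    (hRbd : ∀ t ≥ (0 : ℝ), frob (Rr t) ≤ M * (1 + t) ^ (n - 1) * Real.exp (α * t))
    (hreq : ∀ t ≥ (0 : ℝ), r t =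
      (∑ j, Real.exp (α * t) •
        (Real.cos (β j * t) • (∑ m ∈ Finset.range (n + 1), t ^ m • Pc j m) +
         Real.sin (β j * t) • (∑ m ∈ Finset.range (n + 1), t ^ m • Qc j m))) + Rr t)
    (f : ℝ → Fin d → ℝ) (hf : Continuous f)
    (hfint : IntegrableOn (fun t => Real.exp (-(α * t)) * eNorm (f t)) (Ici 0)) :
    Tendsto (fun t : ℝ =>
      ((t ^ n * Real.exp (α * t))⁻¹ • ∫ s in Icc (0 : ℝ) t, (r (t - s)).mulVec (f s)) -
        ∑ j,
          (Real.sin (β j * t) •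
            (∫ s in Ici (0 : ℝ), Real.exp (-(α * s)) •
              ((Real.sin (β j * s) • Pstar j + Real.cos (β j * s) • Qstar j).mulVec (f s))) +
           Real.cos (β j * t) •
            (∫ s in Ici (0 : ℝ), Real.exp (-(α * s)) •
              ((Real.cos (β j * s) • Pstar j - Real.sin (β j * s) • Qstar j).mulVec (f s)))))
      atTop (nhds 0) := by
  classical
  set g : ℝ → ℝ := fun s => Real.exp (-(α * s)) * eNorm (f s) with hgdef
  have hgc : Continuous g := by
    rw [hgdef]
    exact (Real.continuous_exp.comp (by fun_prop)).mul (continuous_eNorm_comp hf)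
  have hgnn : ∀ s, 0 ≤ g s := fun s => mul_nonneg (Real.exp_pos _).le (eNorm_nonneg _)
  have hgI : IntegrableOn g (Ici (0 : ℝ)) := hfint
  set Iinf : ℝ := ∫ s in Ici (0 : ℝ), g s with hIdef
  have hInn : 0 ≤ Iinf := setIntegral_nonneg measurableSet_Ici fun s _ => hgnn s
  set J : ℝ → ℝ := fun t => ∫ s in Ici (0 : ℝ),
      |Set.indicator (Icc (0 : ℝ) t) (fun u => ((t - u) / t) ^ n) s - 1| * g s with hJdef
  have hJ : Tendsto J atTop (nhds 0) := by
    have key := tendsto_integral_filter_of_dominated_convergence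
      (μ := volume.restrict (Ici (0 : ℝ))) (l := atTop)
      (F := fun (t : ℝ) (s : ℝ) =>
        |Set.indicator (Icc (0 : ℝ) t) (fun u => ((t - u) / t) ^ n) s - 1| * g s)
      (f := fun _ => (0 : ℝ)) (bound := g) ?_ ?_ hgI ?_
    · rw [hJdef]; simpa using key
    · refine Eventually.of_forall fun t => ?_
      apply Measurable.aestronglyMeasurable
      apply Measurable.mul _ hgc.measurable
      apply Measurable.abs
      apply Measurable.sub _ measurable_const
      exact Measurable.indicator (by fun_prop) measurableSet_Icc
    · filter_upwards [eventually_ge_atTop (1 : ℝ)] with t ht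
      refine ae_of_all _ fun s => ?_
      have hb : |Set.indicator (Icc (0 : ℝ) t) (fun u => ((t - u) / t) ^ n) s - 1| ≤ 1 := by
        by_cases hs : s ∈ Icc (0 : ℝ) t
        · rw [Set.indicator_of_mem hs]
          have h1 : 0 ≤ (t - s) / t := div_nonneg (by linarith [hs.2]) (by linarith)
          have h2 : (t - s) / t ≤ 1 := by
            rw [div_le_one (by linarith : (0 : ℝ) < t)]; linarith [hs.1]
          have h3 : ((t - s) / t) ^ n ≤ 1 := pow_le_one₀ h1 h2
          have h4 : 0 ≤ ((t - s) / t) ^ n := pow_nonneg h1 _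
          rw [abs_le]; constructor <;> simp <;> linarith
        · rw [Set.indicator_of_notMem hs]; simp
      rw [Real.norm_eq_abs, abs_of_nonneg (mul_nonneg (abs_nonneg _) (hgnn s))]
      exact mul_le_of_le_one_left (hgnn s) hb
    · refine (ae_restrict_iff' measurableSet_Ici).2 (ae_of_all _ fun s hs => ?_)
      have h1 : Tendsto (fun t : ℝ => ((t - s) / t) ^ n) atTop (nhds 1) := by
      -- FILL-H1
        have h2 : Tendsto (fun t : ℝ => 1 - s * t⁻¹) atTop (nhds 1) := by
          have h3 := (tendsto_inv_atTop_zero (𝕜 := ℝ)).const_mul s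
          have h4 := (tendsto_const_nhds (α := ℝ) (f := atTop) (x := (1:ℝ))).sub h3
          simpa using h4
        have h4 : (fun t : ℝ => (1 - s * t⁻¹) ^ n) =ᶠ[atTop] fun t => ((t - s) / t) ^ n := by
          filter_upwards [eventually_gt_atTop (0 : ℝ)] with t ht
          rw [sub_div, div_self ht.ne']
          ring
        have h5 := h2.pow n
        rw [one_pow] at h5
        exact h5.congr' h4
      have h6 : Tendsto (fun t : ℝ => |((t - s) / t) ^ n - 1| * g s) atTop (nhds 0) := by
        have h7 := ((h1.sub_const 1).abs).mul_const (g s)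
        simpa using h7
      refine Filter.Tendsto.congr' ?_ h6
      filter_upwards [eventually_ge_atTop s] with t ht
      simp only [Set.indicator_of_mem (show s ∈ Icc (0:ℝ) t from ⟨hs, ht⟩)]
  set C1 : ℝ := 2 * ∑ j, (frob (Pstar j) + frob (Qstar j)) with hC1
  set C2 : ℝ := (∑ j, ∑ m ∈ Finset.range n, (frob (Pc j m) + frob (Qc j m))) * Iinf
      + M * 2 ^ (n - 1) * Iinf with hC2
  refine squeeze_zero_norm' (a := fun t => C1 * J t + C2 * t⁻¹) ?_ ?_
  swap
  · have hlim := (hJ.const_mul C1).add ((tendsto_inv_atTop_zero (𝕜 := ℝ)).const_mul C2)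
    simpa using hlim
  filter_upwards [eventually_ge_atTop (1 : ℝ)] with t ht
  have ht0 : (0 : ℝ) < t := lt_of_lt_of_le one_pos ht
  have htne : t ≠ 0 := ht0.ne'
  have hE : (0 : ℝ) < Real.exp (α * t) := Real.exp_pos _
  have hEne : Real.exp (α * t) ≠ 0 := hE.ne'
  have htn : (0 : ℝ) < t ^ n := pow_pos ht0 n
  have hpow : t ^ n = t ^ (n - 1) * t := by
    conv_lhs => rw [show n = (n - 1) + 1 by omega]
    rw [pow_succ]
  have hIccIci : Icc (0 : ℝ) t ⊆ Ici 0 := fun x hx => hx.1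
  have hIoiIci : Ioi t ⊆ Ici (0 : ℝ) := fun x hx => le_of_lt (lt_of_le_of_lt ht0.le hx)
  have hgIcc : IntegrableOn g (Icc (0 : ℝ) t) := hgI.mono_set hIccIci
  have hgIoi : IntegrableOn g (Ioi t) := hgI.mono_set hIoiIci
  have hdisj : Disjoint (Icc (0 : ℝ) t) (Ioi t) :=
    Set.disjoint_left.mpr fun x hx hx' => absurd hx.2 (not_le.mpr hx')
  -- bounds for V1, V2
  have hV1bd : ∀ (j : Fin N) (s : ℝ), ‖Real.exp (-(α * s)) • ((Real.sin (β j * s) • Pstar j + Real.cos (β j * s) • Qstar j).mulVec (f s))‖ ≤ (frob (Pstar j) + frob (Qstar j)) * g s := by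
    intro j s
    simp only [hgdef]
    exact norm_smul_mulVec_le (Real.exp_pos _).le
      (frob_comb_le _ _ _ _ (Real.abs_sin_le_one _) (Real.abs_cos_le_one _)) (f s)
  have hV2bd : ∀ (j : Fin N) (s : ℝ), ‖Real.exp (-(α * s)) • ((Real.cos (β j * s) • Pstar j - Real.sin (β j * s) • Qstar j).mulVec (f s))‖ ≤ (frob (Pstar j) + frob (Qstar j)) * g s := by
    intro j s
    simp only [hgdef]
    exact norm_smul_mulVec_le (Real.exp_pos _).le
      (frob_comb_sub_le _ _ _ _ (Real.abs_cos_le_one _) (Real.abs_sin_le_one _)) (f s)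
  -- continuity
  have hV1c : ∀ j : Fin N, Continuous fun s => Real.exp (-(α * s)) • ((Real.sin (β j * s) • Pstar j + Real.cos (β j * s) • Qstar j).mulVec (f s)) := by
    intro j
    exact (Real.continuous_exp.comp (by fun_prop)).smul
      ((((Real.continuous_sin.comp (by fun_prop)).smul continuous_const).add
        ((Real.continuous_cos.comp (by fun_prop)).smul continuous_const)).matrix_mulVec hf)
  have hV2c : ∀ j : Fin N, Continuous fun s => Real.exp (-(α * s)) • ((Real.cos (β j * s) • Pstar j - Real.sin (β j * s) • Qstar j).mulVec (f s)) := by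
    intro j
    exact (Real.continuous_exp.comp (by fun_prop)).smul
      ((((Real.continuous_cos.comp (by fun_prop)).smul continuous_const).sub
        ((Real.continuous_sin.comp (by fun_prop)).smul continuous_const)).matrix_mulVec hf)
  have hV1int : ∀ j : Fin N, IntegrableOn (fun s => Real.exp (-(α * s)) • ((Real.sin (β j * s) • Pstar j + Real.cos (β j * s) • Qstar j).mulVec (f s))) (Ici (0 : ℝ)) := fun j =>
    Integrable.mono' (hgI.const_mul _) (hV1c j).aestronglyMeasurable
      (ae_of_all _ fun s => hV1bd j s)
  have hV2int : ∀ j : Fin N, IntegrableOn (fun s => Real.exp (-(α * s)) • ((Real.cos (β j * s) • Pstar j - Real.sin (β j * s) • Qstar j).mulVec (f s))) (Ici (0 : ℝ)) := fun j =>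
    Integrable.mono' (hgI.const_mul _) (hV2c j).aestronglyMeasurable
      (ae_of_all _ fun s => hV2bd j s)
  have hWc : Continuous fun s : ℝ => ((t - s) / t) ^ n := by fun_prop
  have hU1c : ∀ j : Fin N, Continuous fun s => ((t - s) / t) ^ n • (Real.exp (-(α * s)) • ((Real.sin (β j * s) • Pstar j + Real.cos (β j * s) • Qstar j).mulVec (f s))) := fun j => hWc.smul (hV1c j)
  have hU2c : ∀ j : Fin N, Continuous fun s => ((t - s) / t) ^ n • (Real.exp (-(α * s)) • ((Real.cos (β j * s) • Pstar j - Real.sin (β j * s) • Qstar j).mulVec (f s))) := fun j => hWc.smul (hV2c j)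
  have hU1i : ∀ j : Fin N, IntegrableOn (fun s => ((t - s) / t) ^ n • (Real.exp (-(α * s)) • ((Real.sin (β j * s) • Pstar j + Real.cos (β j * s) • Qstar j).mulVec (f s)))) (Icc (0 : ℝ) t) := fun j =>
    (hU1c j).integrableOn_Icc
  have hU2i : ∀ j : Fin N, IntegrableOn (fun s => ((t - s) / t) ^ n • (Real.exp (-(α * s)) • ((Real.cos (β j * s) • Pstar j - Real.sin (β j * s) • Qstar j).mulVec (f s)))) (Icc (0 : ℝ) t) := fun j =>
    (hU2c j).integrableOn_Icc
  have hULc : ∀ j : Fin N, Continuous fun s => (t ^ n)⁻¹ • (Real.exp (-(α * s)) • ((Real.cos (β j * (t - s)) • (∑ m ∈ Finset.range n, (t - s) ^ m • Pc j m) + Real.sin (β j * (t - s)) • (∑ m ∈ Finset.range n, (t - s) ^ m • Qc j m)).mulVec (f s))) := by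
    intro j
    refine Continuous.fun_smul continuous_const ?_
    refine Continuous.fun_smul (Real.continuous_exp.comp (by fun_prop : Continuous fun s : ℝ => -(α * s))) ?_
    refine Continuous.matrix_mulVec ?_ hf
    refine ((Real.continuous_cos.comp (by fun_prop)).smul ?_).add
      ((Real.continuous_sin.comp (by fun_prop)).smul ?_)
    · exact continuous_finset_sum _ fun m _ => (by fun_prop : Continuous fun s : ℝ => (t - s) ^ m).smul continuous_const
    · exact continuous_finset_sum _ fun m _ => (by fun_prop : Continuous fun s : ℝ => (t - s) ^ m).smul continuous_const
  have hULi : ∀ j : Fin N, IntegrableOn (fun s => (t ^ n)⁻¹ • (Real.exp (-(α * s)) • ((Real.cos (β j * (t - s)) • (∑ m ∈ Finset.range n, (t - s) ^ m • Pc j m) + Real.sin (β j * (t - s)) • (∑ m ∈ Finset.range n, (t - s) ^ m • Qc j m)).mulVec (f s)))) (Icc (0 : ℝ) t) := fun j =>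
    (hULc j).integrableOn_Icc
  -- remainder term
  have hURsm : AEStronglyMeasurable (fun s => (t ^ n * Real.exp (α * t))⁻¹ • ((Rr (t - s)).mulVec (f s))) (volume.restrict (Icc (0 : ℝ) t)) := by
    have heq : (fun s => (t ^ n * Real.exp (α * t))⁻¹ • ((Rr (t - s)).mulVec (f s)))
        = fun s => fun i => (t ^ n * Real.exp (α * t))⁻¹ * ∑ k, Rr (t - s) i k * f s k := by
      funext s i
      simp [Matrix.mulVec, dotProduct]
    rw [heq]
    apply Measurable.aestronglyMeasurable
    apply measurable_pi_lambda
    intro i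
    apply Measurable.const_mul
    apply Finset.measurable_sum
    intro k _
    exact ((hRmeas i k).comp (measurable_const.sub measurable_id)).mul
      ((continuous_apply k).comp hf).measurable
  have hURbd : ∀ s ∈ Icc (0 : ℝ) t, ‖(t ^ n * Real.exp (α * t))⁻¹ • ((Rr (t - s)).mulVec (f s))‖ ≤ M * 2 ^ (n - 1) * t⁻¹ * g s := by
    intro s hs
    have hts : (0 : ℝ) ≤ t - s := by linarith [hs.2]
    have hfr := (norm_mulVec_le (Rr (t - s)) (f s)).trans
      (mul_le_mul_of_nonneg_right (hRbd (t - s) hts) (eNorm_nonneg _))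
    have hexp : Real.exp (α * (t - s)) = Real.exp (α * t) * Real.exp (-(α * s)) := by
      rw [← Real.exp_add]; ring_nf
    have h2 : (1 + (t - s)) ^ (n - 1) ≤ 2 ^ (n - 1) * t ^ (n - 1) := by
      rw [← mul_pow]
      exact pow_le_pow_left₀ (by linarith [hs.1]) (by linarith [hs.1]) _
    have heNn := eNorm_nonneg (f s)
    rw [norm_smul, Real.norm_eq_abs, abs_of_nonneg (inv_nonneg.2 (mul_nonneg htn.le hE.le))]
    calc (t ^ n * Real.exp (α * t))⁻¹ * ‖(Rr (t - s)).mulVec (f s)‖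
        ≤ (t ^ n * Real.exp (α * t))⁻¹
          * (M * (1 + (t - s)) ^ (n - 1) * Real.exp (α * (t - s)) * eNorm (f s)) :=
          mul_le_mul_of_nonneg_left hfr (by positivity)
      _ ≤ (t ^ n * Real.exp (α * t))⁻¹
          * (M * (2 ^ (n - 1) * t ^ (n - 1)) * Real.exp (α * (t - s)) * eNorm (f s)) := by
          have hep := Real.exp_pos (α * (t - s))
          refine mul_le_mul_of_nonneg_left ?_ (by positivity)
          refine mul_le_mul_of_nonneg_right ?_ heNn
          refine mul_le_mul_of_nonneg_right ?_ hep.le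
          exact mul_le_mul_of_nonneg_left h2 hM.le
      _ = M * 2 ^ (n - 1) * t⁻¹ * g s := by
          simp only [hgdef]
          rw [hexp, hpow]
          field_simp
  have hURi : IntegrableOn (fun s => (t ^ n * Real.exp (α * t))⁻¹ • ((Rr (t - s)).mulVec (f s))) (Icc (0 : ℝ) t) := by
    refine Integrable.mono' (hgIcc.const_mul (M * 2 ^ (n - 1) * t⁻¹)) hURsm ?_
    exact (ae_restrict_iff' measurableSet_Icc).2 (ae_of_all _ hURbd)
  -- pointwise identity
  have hpt : Set.EqOn
      (fun s => (t ^ n * Real.exp (α * t))⁻¹ • ((r (t - s)).mulVec (f s)))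
      (fun s => (∑ j, (Real.sin (β j * t) • ((t - s) / t) ^ n • (Real.exp (-(α * s)) • ((Real.sin (β j * s) • Pstar j + Real.cos (β j * s) • Qstar j).mulVec (f s))) + Real.cos (β j * t) • ((t - s) / t) ^ n • (Real.exp (-(α * s)) • ((Real.cos (β j * s) • Pstar j - Real.sin (β j * s) • Qstar j).mulVec (f s)))
        + (t ^ n)⁻¹ • (Real.exp (-(α * s)) • ((Real.cos (β j * (t - s)) • (∑ m ∈ Finset.range n, (t - s) ^ m • Pc j m) + Real.sin (β j * (t - s)) • (∑ m ∈ Finset.range n, (t - s) ^ m • Qc j m)).mulVec (f s))))) + (t ^ n * Real.exp (α * t))⁻¹ • ((Rr (t - s)).mulVec (f s))) (Icc (0 : ℝ) t) := by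
    intro s hs
    have hts : (0 : ℝ) ≤ t - s := by linarith [hs.2]
    simp only []
    rw [hreq (t - s) hts, Matrix.add_mulVec, _root_.sum_mulVec, smul_add]
    congr 1
    rw [Finset.smul_sum]
    refine Finset.sum_congr rfl fun j _ => ?_
    have hP : (∑ m ∈ Finset.range (n + 1), (t - s) ^ m • Pc j m)
        = (∑ m ∈ Finset.range n, (t - s) ^ m • Pc j m) + (t - s) ^ n • Pstar j := by
      rw [Finset.sum_range_succ, hPlead]
    have hQ : (∑ m ∈ Finset.range (n + 1), (t - s) ^ m • Qc j m)
        = (∑ m ∈ Finset.range n, (t - s) ^ m • Qc j m) + (t - s) ^ n • Qstar j := by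
      rw [Finset.sum_range_succ, hQlead]
    rw [hP, hQ]
    have hexp : Real.exp (α * (t - s)) = Real.exp (α * t) * Real.exp (-(α * s)) := by
      rw [← Real.exp_add]; ring_nf
    have hcos : Real.cos (β j * (t - s))
        = Real.cos (β j * t) * Real.cos (β j * s) + Real.sin (β j * t) * Real.sin (β j * s) := by
      rw [mul_sub, Real.cos_sub]
    have hsin : Real.sin (β j * (t - s))
        = Real.sin (β j * t) * Real.cos (β j * s) - Real.cos (β j * t) * Real.sin (β j * s) := by
      rw [mul_sub, Real.sin_sub]
    rw [hexp, hcos, hsin, div_pow]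
    simp only [Matrix.add_mulVec, Matrix.sub_mulVec, Matrix.smul_mulVec]
    match_scalars <;> field_simp <;> ring
  have hIj : ∀ j : Fin N, IntegrableOn (fun s => Real.sin (β j * t) • ((t - s) / t) ^ n • (Real.exp (-(α * s)) • ((Real.sin (β j * s) • Pstar j + Real.cos (β j * s) • Qstar j).mulVec (f s)))
      + Real.cos (β j * t) • ((t - s) / t) ^ n • (Real.exp (-(α * s)) • ((Real.cos (β j * s) • Pstar j - Real.sin (β j * s) • Qstar j).mulVec (f s))) + (t ^ n)⁻¹ • (Real.exp (-(α * s)) • ((Real.cos (β j * (t - s)) • (∑ m ∈ Finset.range n, (t - s) ^ m • Pc j m) + Real.sin (β j * (t - s)) • (∑ m ∈ Finset.range n, (t - s) ^ m • Qc j m)).mulVec (f s)))) (Icc (0 : ℝ) t) := fun j => by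
    refine Continuous.integrableOn_Icc ?_
    exact (((continuous_const.fun_smul (hU1c j)).fun_add (continuous_const.fun_smul (hU2c j))).fun_add
      (hULc j))
  have hsplit : (t ^ n * Real.exp (α * t))⁻¹ • (∫ s in Icc (0 : ℝ) t, (r (t - s)).mulVec (f s))
      = (∑ j, (Real.sin (β j * t) • (∫ s in Icc (0 : ℝ) t, ((t - s) / t) ^ n • (Real.exp (-(α * s)) • ((Real.sin (β j * s) • Pstar j + Real.cos (β j * s) • Qstar j).mulVec (f s)))) + Real.cos (β j * t) • (∫ s in Icc (0 : ℝ) t, ((t - s) / t) ^ n • (Real.exp (-(α * s)) • ((Real.cos (β j * s) • Pstar j - Real.sin (β j * s) • Qstar j).mulVec (f s)))) + (∫ s in Icc (0 : ℝ) t, (t ^ n)⁻¹ • (Real.exp (-(α * s)) • ((Real.cos (β j * (t - s)) • (∑ m ∈ Finset.range n, (t - s) ^ m • Pc j m) + Real.sin (β j * (t - s)) • (∑ m ∈ Finset.range n, (t - s) ^ m • Qc j m)).mulVec (f s))))))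
        + (∫ s in Icc (0 : ℝ) t, (t ^ n * Real.exp (α * t))⁻¹ • ((Rr (t - s)).mulVec (f s))) := by
    rw [← integral_smul]
    rw [setIntegral_congr_fun measurableSet_Icc hpt]
    rw [integral_add (integrable_finset_sum _ fun j _ => hIj j) hURi]
    rw [integral_finset_sum _ fun j _ => hIj j]
    congr 1
    refine Finset.sum_congr rfl fun j _ => ?_
    rw [integral_add (((continuous_const.fun_smul (hU1c j)).fun_add
        (continuous_const.fun_smul (hU2c j))).integrableOn_Icc) (hULi j),
      integral_add ((continuous_const.fun_smul (hU1c j)).integrableOn_Icc)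
        ((continuous_const.fun_smul (hU2c j)).integrableOn_Icc), integral_smul, integral_smul]
  -- J split
  have hJsplit : J t = (∫ s in Icc (0 : ℝ) t, |((t - s) / t) ^ n - 1| * g s)
      + ∫ s in Ioi t, g s := by
    have hIccInt : IntegrableOn
        (fun s => |Set.indicator (Icc (0 : ℝ) t) (fun u => ((t - u) / t) ^ n) s - 1| * g s)
        (Icc (0 : ℝ) t) := by
      refine IntegrableOn.congr_fun
        (f := fun s => |((t - s) / t) ^ n - 1| * g s) ?_ ?_ measurableSet_Icc
      · exact (((hWc.sub continuous_const).abs).mul hgc).integrableOn_Icc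
      · intro s hs
        simp only [Set.indicator_of_mem hs]
    have hIoiInt : IntegrableOn
        (fun s => |Set.indicator (Icc (0 : ℝ) t) (fun u => ((t - u) / t) ^ n) s - 1| * g s)
        (Ioi t) := by
      refine IntegrableOn.congr_fun (f := g) hgIoi ?_ measurableSet_Ioi
      intro s hs
      have hnot : s ∉ Icc (0 : ℝ) t := fun hc => absurd hc.2 (not_le.mpr hs)
      simp only [Set.indicator_of_notMem hnot]
      simp
    have hu := setIntegral_union hdisj measurableSet_Ioi hIccInt hIoiInt
    rw [Icc_union_Ioi_eq_Ici ht0.le] at hu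
    simp only [hJdef]
    rw [hu]
    congr 1
    · refine setIntegral_congr_fun measurableSet_Icc fun s hs => ?_
      simp only [Set.indicator_of_mem hs]
    · refine setIntegral_congr_fun measurableSet_Ioi fun s hs => ?_
      have hnot : s ∉ Icc (0 : ℝ) t := fun hc => absurd hc.2 (not_le.mpr hs)
      simp only [Set.indicator_of_notMem hnot]
      simp
  -- Delta bounds
  have hDelta1 : ∀ j : Fin N, ‖(∫ s in Icc (0 : ℝ) t, ((t - s) / t) ^ n • (Real.exp (-(α * s)) • ((Real.sin (β j * s) • Pstar j + Real.cos (β j * s) • Qstar j).mulVec (f s)))) - (∫ s in Ici (0 : ℝ), Real.exp (-(α * s)) • ((Real.sin (β j * s) • Pstar j + Real.cos (β j * s) • Qstar j).mulVec (f s)))‖ ≤ (frob (Pstar j) + frob (Qstar j)) * J t := by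
    intro j
    have hD1s : (∫ s in Ici (0 : ℝ), Real.exp (-(α * s)) • ((Real.sin (β j * s) • Pstar j + Real.cos (β j * s) • Qstar j).mulVec (f s))) = (∫ s in Icc (0 : ℝ) t, Real.exp (-(α * s)) • ((Real.sin (β j * s) • Pstar j + Real.cos (β j * s) • Qstar j).mulVec (f s)))
        + ∫ s in Ioi t, Real.exp (-(α * s)) • ((Real.sin (β j * s) • Pstar j + Real.cos (β j * s) • Qstar j).mulVec (f s)) := by
      have hu := setIntegral_union hdisj measurableSet_Ioi
        ((hV1int j).mono_set hIccIci) ((hV1int j).mono_set hIoiIci)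
      rw [Icc_union_Ioi_eq_Ici ht0.le] at hu
      exact hu
    rw [hD1s, sub_add_eq_sub_sub,
      ← integral_sub (hU1i j) ((hV1int j).mono_set hIccIci)]
    refine (norm_sub_le _ _).trans ?_
    have h1 : ‖∫ s in Icc (0 : ℝ) t, (((t - s) / t) ^ n • (Real.exp (-(α * s)) • ((Real.sin (β j * s) • Pstar j + Real.cos (β j * s) • Qstar j).mulVec (f s))) - Real.exp (-(α * s)) • ((Real.sin (β j * s) • Pstar j + Real.cos (β j * s) • Qstar j).mulVec (f s)))‖
        ≤ ∫ s in Icc (0 : ℝ) t, (frob (Pstar j) + frob (Qstar j)) * (|((t - s) / t) ^ n - 1| * g s) := by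
      refine norm_integral_le_of_norm_le ((((hWc.sub continuous_const).abs).mul hgc).integrableOn_Icc.const_mul _) ?_
      refine (ae_restrict_iff' measurableSet_Icc).2 (ae_of_all _ fun s hs => ?_)
      have heq : ((t - s) / t) ^ n • (Real.exp (-(α * s)) • ((Real.sin (β j * s) • Pstar j + Real.cos (β j * s) • Qstar j).mulVec (f s))) - Real.exp (-(α * s)) • ((Real.sin (β j * s) • Pstar j + Real.cos (β j * s) • Qstar j).mulVec (f s))
          = (((t - s) / t) ^ n - 1) • (Real.exp (-(α * s)) • ((Real.sin (β j * s) • Pstar j + Real.cos (β j * s) • Qstar j).mulVec (f s))) := by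
        rw [sub_smul, one_smul]
      rw [heq, norm_smul, Real.norm_eq_abs]
      have := mul_le_mul_of_nonneg_left (hV1bd j s) (abs_nonneg (((t - s) / t) ^ n - 1))
      nlinarith [abs_nonneg (((t - s) / t) ^ n - 1), hgnn s]
    have h2 : ‖∫ s in Ioi t, Real.exp (-(α * s)) • ((Real.sin (β j * s) • Pstar j + Real.cos (β j * s) • Qstar j).mulVec (f s))‖ ≤ ∫ s in Ioi t, (frob (Pstar j) + frob (Qstar j)) * g s :=
      norm_integral_le_of_norm_le (hgIoi.const_mul _) (ae_of_all _ fun s => hV1bd j s)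
    refine (add_le_add h1 h2).trans (le_of_eq ?_)
    rw [integral_const_mul, integral_const_mul, hJsplit, mul_add]
  have hDelta2 : ∀ j : Fin N, ‖(∫ s in Icc (0 : ℝ) t, ((t - s) / t) ^ n • (Real.exp (-(α * s)) • ((Real.cos (β j * s) • Pstar j - Real.sin (β j * s) • Qstar j).mulVec (f s)))) - (∫ s in Ici (0 : ℝ), Real.exp (-(α * s)) • ((Real.cos (β j * s) • Pstar j - Real.sin (β j * s) • Qstar j).mulVec (f s)))‖ ≤ (frob (Pstar j) + frob (Qstar j)) * J t := by
    intro j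
    have hD2s : (∫ s in Ici (0 : ℝ), Real.exp (-(α * s)) • ((Real.cos (β j * s) • Pstar j - Real.sin (β j * s) • Qstar j).mulVec (f s))) = (∫ s in Icc (0 : ℝ) t, Real.exp (-(α * s)) • ((Real.cos (β j * s) • Pstar j - Real.sin (β j * s) • Qstar j).mulVec (f s)))
        + ∫ s in Ioi t, Real.exp (-(α * s)) • ((Real.cos (β j * s) • Pstar j - Real.sin (β j * s) • Qstar j).mulVec (f s)) := by
      have hu := setIntegral_union hdisj measurableSet_Ioi
        ((hV2int j).mono_set hIccIci) ((hV2int j).mono_set hIoiIci)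
      rw [Icc_union_Ioi_eq_Ici ht0.le] at hu
      exact hu
    rw [hD2s, sub_add_eq_sub_sub,
      ← integral_sub (hU2i j) ((hV2int j).mono_set hIccIci)]
    refine (norm_sub_le _ _).trans ?_
    have h1 : ‖∫ s in Icc (0 : ℝ) t, (((t - s) / t) ^ n • (Real.exp (-(α * s)) • ((Real.cos (β j * s) • Pstar j - Real.sin (β j * s) • Qstar j).mulVec (f s))) - Real.exp (-(α * s)) • ((Real.cos (β j * s) • Pstar j - Real.sin (β j * s) • Qstar j).mulVec (f s)))‖
        ≤ ∫ s in Icc (0 : ℝ) t, (frob (Pstar j) + frob (Qstar j)) * (|((t - s) / t) ^ n - 1| * g s) := by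
      refine norm_integral_le_of_norm_le ((((hWc.sub continuous_const).abs).mul hgc).integrableOn_Icc.const_mul _) ?_
      refine (ae_restrict_iff' measurableSet_Icc).2 (ae_of_all _ fun s hs => ?_)
      have heq : ((t - s) / t) ^ n • (Real.exp (-(α * s)) • ((Real.cos (β j * s) • Pstar j - Real.sin (β j * s) • Qstar j).mulVec (f s))) - Real.exp (-(α * s)) • ((Real.cos (β j * s) • Pstar j - Real.sin (β j * s) • Qstar j).mulVec (f s))
          = (((t - s) / t) ^ n - 1) • (Real.exp (-(α * s)) • ((Real.cos (β j * s) • Pstar j - Real.sin (β j * s) • Qstar j).mulVec (f s))) := by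
        rw [sub_smul, one_smul]
      rw [heq, norm_smul, Real.norm_eq_abs]
      have := mul_le_mul_of_nonneg_left (hV2bd j s) (abs_nonneg (((t - s) / t) ^ n - 1))
      nlinarith [abs_nonneg (((t - s) / t) ^ n - 1), hgnn s]
    have h2 : ‖∫ s in Ioi t, Real.exp (-(α * s)) • ((Real.cos (β j * s) • Pstar j - Real.sin (β j * s) • Qstar j).mulVec (f s))‖ ≤ ∫ s in Ioi t, (frob (Pstar j) + frob (Qstar j)) * g s :=
      norm_integral_le_of_norm_le (hgIoi.const_mul _) (ae_of_all _ fun s => hV2bd j s)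
    refine (add_le_add h1 h2).trans (le_of_eq ?_)
    rw [integral_const_mul, integral_const_mul, hJsplit, mul_add]
  have hIccle : ∫ s in Icc (0 : ℝ) t, g s ≤ Iinf := by
    refine setIntegral_mono_set hgI (ae_of_all _ fun s => hgnn s)
      (HasSubset.Subset.eventuallyLE hIccIci)
  -- UL bound
  have hULbd : ∀ j : Fin N, ‖(∫ s in Icc (0 : ℝ) t, (t ^ n)⁻¹ • (Real.exp (-(α * s)) • ((Real.cos (β j * (t - s)) • (∑ m ∈ Finset.range n, (t - s) ^ m • Pc j m) + Real.sin (β j * (t - s)) • (∑ m ∈ Finset.range n, (t - s) ^ m • Qc j m)).mulVec (f s))))‖ ≤ ((∑ m ∈ Finset.range n, (frob (Pc j m) + frob (Qc j m))) * Iinf) * t⁻¹ := by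
    intro j
    have hCLnn : (0 : ℝ) ≤ (∑ m ∈ Finset.range n, (frob (Pc j m) + frob (Qc j m))) :=
      Finset.sum_nonneg fun m _ => add_nonneg (frob_nonneg _) (frob_nonneg _)
    have hb : ∀ s ∈ Icc (0 : ℝ) t, ‖(t ^ n)⁻¹ • (Real.exp (-(α * s)) • ((Real.cos (β j * (t - s)) • (∑ m ∈ Finset.range n, (t - s) ^ m • Pc j m) + Real.sin (β j * (t - s)) • (∑ m ∈ Finset.range n, (t - s) ^ m • Qc j m)).mulVec (f s)))‖ ≤ t⁻¹ * ((∑ m ∈ Finset.range n, (frob (Pc j m) + frob (Qc j m))) * g s) := by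
      intro s hs
      have hts : (0 : ℝ) ≤ t - s := by linarith [hs.2]
      have hfrP : frob (∑ m ∈ Finset.range n, (t - s) ^ m • Pc j m) ≤ t ^ (n - 1) * ∑ m ∈ Finset.range n, frob (Pc j m) := by
        refine (frob_sum_le _ _).trans ?_
        rw [Finset.mul_sum]
        refine Finset.sum_le_sum fun m hm => ?_
        rw [frob_smul, abs_of_nonneg (pow_nonneg hts m)]
        refine mul_le_mul_of_nonneg_right ?_ (frob_nonneg _)
        calc (t - s) ^ m ≤ t ^ m := pow_le_pow_left₀ hts (by linarith [hs.1]) m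
          _ ≤ t ^ (n - 1) := pow_le_pow_right₀ ht (by have := Finset.mem_range.mp hm; omega)
      have hfrQ : frob (∑ m ∈ Finset.range n, (t - s) ^ m • Qc j m) ≤ t ^ (n - 1) * ∑ m ∈ Finset.range n, frob (Qc j m) := by
        refine (frob_sum_le _ _).trans ?_
        rw [Finset.mul_sum]
        refine Finset.sum_le_sum fun m hm => ?_
        rw [frob_smul, abs_of_nonneg (pow_nonneg hts m)]
        refine mul_le_mul_of_nonneg_right ?_ (frob_nonneg _)
        calc (t - s) ^ m ≤ t ^ m := pow_le_pow_left₀ hts (by linarith [hs.1]) m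
          _ ≤ t ^ (n - 1) := pow_le_pow_right₀ ht (by have := Finset.mem_range.mp hm; omega)
      have hfr : frob (Real.cos (β j * (t - s)) • (∑ m ∈ Finset.range n, (t - s) ^ m • Pc j m) + Real.sin (β j * (t - s)) • (∑ m ∈ Finset.range n, (t - s) ^ m • Qc j m)) ≤ t ^ (n - 1) * (∑ m ∈ Finset.range n, (frob (Pc j m) + frob (Qc j m))) := by
        refine (frob_comb_le _ _ _ _ (Real.abs_cos_le_one _) (Real.abs_sin_le_one _)).trans ?_
        rw [Finset.sum_add_distrib, mul_add]
        exact add_le_add hfrP hfrQ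
      rw [norm_smul, Real.norm_eq_abs, abs_of_nonneg (inv_nonneg.2 htn.le)]
      have h2 := norm_smul_mulVec_le (Real.exp_pos (-(α * s))).le hfr (f s)
      refine le_trans (mul_le_mul_of_nonneg_left h2 (inv_nonneg.2 htn.le)) (le_of_eq ?_)
      simp only [hgdef]
      rw [hpow]
      field_simp
    have h1 : ‖(∫ s in Icc (0 : ℝ) t, (t ^ n)⁻¹ • (Real.exp (-(α * s)) • ((Real.cos (β j * (t - s)) • (∑ m ∈ Finset.range n, (t - s) ^ m • Pc j m) + Real.sin (β j * (t - s)) • (∑ m ∈ Finset.range n, (t - s) ^ m • Qc j m)).mulVec (f s))))‖ ≤ ∫ s in Icc (0 : ℝ) t, t⁻¹ * ((∑ m ∈ Finset.range n, (frob (Pc j m) + frob (Qc j m))) * g s) := by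
      refine norm_integral_le_of_norm_le ((hgIcc.const_mul _).const_mul _) ?_
      exact (ae_restrict_iff' measurableSet_Icc).2 (ae_of_all _ hb)
    refine h1.trans ?_
    rw [integral_const_mul, integral_const_mul]
    have h3 : (0:ℝ) ≤ t⁻¹ := inv_nonneg.2 ht0.le
    exact le_trans (mul_le_mul_of_nonneg_left
      (mul_le_mul_of_nonneg_left hIccle hCLnn) h3) (le_of_eq (by ring))
  -- UR total bound
  have hURtot : ‖(∫ s in Icc (0 : ℝ) t, (t ^ n * Real.exp (α * t))⁻¹ • ((Rr (t - s)).mulVec (f s)))‖ ≤ M * 2 ^ (n - 1) * Iinf * t⁻¹ := by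
    have h1 : ‖(∫ s in Icc (0 : ℝ) t, (t ^ n * Real.exp (α * t))⁻¹ • ((Rr (t - s)).mulVec (f s)))‖ ≤ ∫ s in Icc (0 : ℝ) t, M * 2 ^ (n - 1) * t⁻¹ * g s := by
      refine norm_integral_le_of_norm_le (hgIcc.const_mul _) ?_
      exact (ae_restrict_iff' measurableSet_Icc).2 (ae_of_all _ hURbd)
    refine h1.trans ?_
    rw [integral_const_mul]
    exact le_trans (mul_le_mul_of_nonneg_left hIccle (by positivity)) (le_of_eq (by ring))
  -- rearrangement of the goal expression
  have hX : ((t ^ n * Real.exp (α * t))⁻¹ • ∫ s in Icc (0 : ℝ) t, (r (t - s)).mulVec (f s)) -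
        ∑ j, (Real.sin (β j * t) • (∫ s in Ici (0 : ℝ), Real.exp (-(α * s)) • ((Real.sin (β j * s) • Pstar j + Real.cos (β j * s) • Qstar j).mulVec (f s))) + Real.cos (β j * t) • (∫ s in Ici (0 : ℝ), Real.exp (-(α * s)) • ((Real.cos (β j * s) • Pstar j - Real.sin (β j * s) • Qstar j).mulVec (f s))))
      = (∑ j, (Real.sin (β j * t) • ((∫ s in Icc (0 : ℝ) t, ((t - s) / t) ^ n • (Real.exp (-(α * s)) • ((Real.sin (β j * s) • Pstar j + Real.cos (β j * s) • Qstar j).mulVec (f s)))) - (∫ s in Ici (0 : ℝ), Real.exp (-(α * s)) • ((Real.sin (β j * s) • Pstar j + Real.cos (β j * s) • Qstar j).mulVec (f s))))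
          + Real.cos (β j * t) • ((∫ s in Icc (0 : ℝ) t, ((t - s) / t) ^ n • (Real.exp (-(α * s)) • ((Real.cos (β j * s) • Pstar j - Real.sin (β j * s) • Qstar j).mulVec (f s)))) - (∫ s in Ici (0 : ℝ), Real.exp (-(α * s)) • ((Real.cos (β j * s) • Pstar j - Real.sin (β j * s) • Qstar j).mulVec (f s)))) + (∫ s in Icc (0 : ℝ) t, (t ^ n)⁻¹ • (Real.exp (-(α * s)) • ((Real.cos (β j * (t - s)) • (∑ m ∈ Finset.range n, (t - s) ^ m • Pc j m) + Real.sin (β j * (t - s)) • (∑ m ∈ Finset.range n, (t - s) ^ m • Qc j m)).mulVec (f s)))))) + (∫ s in Icc (0 : ℝ) t, (t ^ n * Real.exp (α * t))⁻¹ • ((Rr (t - s)).mulVec (f s))) := by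
    rw [hsplit, add_sub_right_comm, ← Finset.sum_sub_distrib]
    congr 1
    refine Finset.sum_congr rfl fun j _ => ?_
    rw [smul_sub, smul_sub]
    abel
  rw [hX]
  have hsmul_le : ∀ (c : ℝ) (x : Fin d → ℝ), |c| ≤ 1 → ‖c • x‖ ≤ ‖x‖ := fun c x hc => by
    rw [norm_smul, Real.norm_eq_abs]
    exact mul_le_of_le_one_left (norm_nonneg _) hc
  calc ‖(∑ j, (Real.sin (β j * t) • ((∫ s in Icc (0 : ℝ) t, ((t - s) / t) ^ n • (Real.exp (-(α * s)) • ((Real.sin (β j * s) • Pstar j + Real.cos (β j * s) • Qstar j).mulVec (f s)))) - (∫ s in Ici (0 : ℝ), Real.exp (-(α * s)) • ((Real.sin (β j * s) • Pstar j + Real.cos (β j * s) • Qstar j).mulVec (f s))))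
          + Real.cos (β j * t) • ((∫ s in Icc (0 : ℝ) t, ((t - s) / t) ^ n • (Real.exp (-(α * s)) • ((Real.cos (β j * s) • Pstar j - Real.sin (β j * s) • Qstar j).mulVec (f s)))) - (∫ s in Ici (0 : ℝ), Real.exp (-(α * s)) • ((Real.cos (β j * s) • Pstar j - Real.sin (β j * s) • Qstar j).mulVec (f s)))) + (∫ s in Icc (0 : ℝ) t, (t ^ n)⁻¹ • (Real.exp (-(α * s)) • ((Real.cos (β j * (t - s)) • (∑ m ∈ Finset.range n, (t - s) ^ m • Pc j m) + Real.sin (β j * (t - s)) • (∑ m ∈ Finset.range n, (t - s) ^ m • Qc j m)).mulVec (f s)))))) + (∫ s in Icc (0 : ℝ) t, (t ^ n * Real.exp (α * t))⁻¹ • ((Rr (t - s)).mulVec (f s)))‖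
      ≤ ‖∑ j, (Real.sin (β j * t) • ((∫ s in Icc (0 : ℝ) t, ((t - s) / t) ^ n • (Real.exp (-(α * s)) • ((Real.sin (β j * s) • Pstar j + Real.cos (β j * s) • Qstar j).mulVec (f s)))) - (∫ s in Ici (0 : ℝ), Real.exp (-(α * s)) • ((Real.sin (β j * s) • Pstar j + Real.cos (β j * s) • Qstar j).mulVec (f s))))
          + Real.cos (β j * t) • ((∫ s in Icc (0 : ℝ) t, ((t - s) / t) ^ n • (Real.exp (-(α * s)) • ((Real.cos (β j * s) • Pstar j - Real.sin (β j * s) • Qstar j).mulVec (f s)))) - (∫ s in Ici (0 : ℝ), Real.exp (-(α * s)) • ((Real.cos (β j * s) • Pstar j - Real.sin (β j * s) • Qstar j).mulVec (f s)))) + (∫ s in Icc (0 : ℝ) t, (t ^ n)⁻¹ • (Real.exp (-(α * s)) • ((Real.cos (β j * (t - s)) • (∑ m ∈ Finset.range n, (t - s) ^ m • Pc j m) + Real.sin (β j * (t - s)) • (∑ m ∈ Finset.range n, (t - s) ^ m • Qc j m)).mulVec (f s)))))‖ + ‖(∫ s in Icc (0 : ℝ) t, (t ^ n * Real.exp (α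 * t))⁻¹ • ((Rr (t - s)).mulVec (f s)))‖ :=
        norm_add_le _ _
    _ ≤ (∑ j, ((frob (Pstar j) + frob (Qstar j)) * J t + (frob (Pstar j) + frob (Qstar j)) * J t + ((∑ m ∈ Finset.range n, (frob (Pc j m) + frob (Qc j m))) * Iinf) * t⁻¹))
        + M * 2 ^ (n - 1) * Iinf * t⁻¹ := by
        refine add_le_add ((norm_sum_le _ _).trans (Finset.sum_le_sum fun j _ => ?_)) hURtot
        refine (norm_add₃_le).trans ?_
        refine add_le_add (add_le_add ?_ ?_) (hULbd j)
        · exact (hsmul_le _ _ (Real.abs_sin_le_one _)).trans (hDelta1 j)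
        · exact (hsmul_le _ _ (Real.abs_cos_le_one _)).trans (hDelta2 j)
    _ = C1 * J t + C2 * t⁻¹ := by
        rw [hC1, hC2]
        rw [Finset.sum_add_distrib, Finset.sum_add_distrib, ← Finset.sum_mul, ← Finset.sum_mul,
          ← Finset.sum_mul]
        ring
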